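/- Every symplectic finite abelian group is isomorphic (as a symplectic group) to J × J^∨ for some finite abelian group J, where J^∨ = Hom(J, ℚ/ℤ), equipped with the natural pairing [(a,φ),(b,ψ)] = ψ(a) - φ(b). In particular, as an abstract group it is isomorphic to J × J. -/

import Mathlib

noncomputable section
namespace Symp

abbrev Circ := AddCircle (1 : ℚ)

def Good (G : Type) [AddCommGroup G] (f : G → G → Circ) : Prop :=
  ∃ (J : Type) (_ : AddCommGroup J) (_ : Fintype J) (e : G ≃+ J × (J →+ Circ)),
    (∀ x y, f x y = (e y).2 (e x).1 - (e x).2 (e y).1) ∧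
    Nonempty (J ≃+ (J →+ Circ))

def equivOfSubsingleton (A B : Type) [AddCommGroup A] [AddCommGroup B]
    [Subsingleton A] [Subsingleton B] : A ≃+ B where
  toFun _ := 0
  invFun _ := 0
  left_inv _ := Subsingleton.elim _ _
  right_inv _ := Subsingleton.elim _ _
  map_add' _ _ := by simp

instance (A C : Type) [AddCommGroup A] [AddCommGroup C] [Subsingleton A] :
    Subsingleton (A →+ C) :=
  ⟨fun f g => AddMonoidHom.ext fun x => by
    rw [Subsingleton.elim x 0, map_zero, map_zero]⟩

def dualProd (A B C : Type) [AddCommGroup A] [AddCommGroup B] [AddCommGroup C] :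
    ((A →+ C) × (B →+ C)) ≃+ ((A × B) →+ C) where
  toFun p := p.1.comp (AddMonoidHom.fst A B) + p.2.comp (AddMonoidHom.snd A B)
  invFun q := (q.comp (AddMonoidHom.inl A B), q.comp (AddMonoidHom.inr A B))
  left_inv p := by ext a <;> simp
  right_inv q := by
    ext ⟨a, b⟩
    simp only [AddMonoidHom.add_apply, AddMonoidHom.comp_apply]
    rw [← map_add]
    simp
  map_add' p q := by ext a <;> · simp; abel

lemma dualProd_apply {A B C : Type} [AddCommGroup A] [AddCommGroup B] [AddCommGroup C]
    (p : (A →+ C) × (B →+ C)) (x : A × B) :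
    dualProd A B C p x = p.1 x.1 + p.2 x.2 := rfl

lemma good_of_subsingleton (G : Type) [AddCommGroup G] [Subsingleton G]
    (f : G → G → Circ) (h0 : f 0 0 = 0) : Good G f := by
  refine ⟨PUnit, inferInstance, inferInstance, equivOfSubsingleton _ _, fun x y => ?_,
    ⟨equivOfSubsingleton _ _⟩⟩
  rw [Subsingleton.elim x 0, Subsingleton.elim y 0, h0,
    Subsingleton.elim ((equivOfSubsingleton G (PUnit × (PUnit →+ Circ)) 0).2) 0]
  simp

lemma Good.of_equiv {A G : Type} [AddCommGroup A] [AddCommGroup G] (e : A ≃+ G)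
    (F : A → A → Circ) (f : G → G → Circ) (hp : ∀ p q, f (e p) (e q) = F p q)
    (hA : Good A F) : Good G f := by
  obtain ⟨J, i1, i2, eA, hpair, hd⟩ := hA
  refine ⟨J, i1, i2, e.symm.trans eA, fun x y => ?_, hd⟩
  have h1 : f x y = F (e.symm x) (e.symm y) := by
    rw [← hp]; simp
  rw [h1, hpair]
  rfl

lemma good_prod {A B : Type} [AddCommGroup A] [AddCommGroup B]
    (fA : A → A → Circ) (fB : B → B → Circ) (hA : Good A fA) (hB : Good B fB) :
    Good (A × B) (fun p q => fA p.1 q.1 + fB p.2 q.2) := by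
  obtain ⟨J1, i1, i2, e1, h1, ⟨d1⟩⟩ := hA
  obtain ⟨J2, j1, j2, e2, h2, ⟨d2⟩⟩ := hB
  refine ⟨J1 × J2, inferInstance, inferInstance,
    (e1.prodCongr e2).trans ((AddEquiv.prodProdProdComm J1 (J1 →+ Circ) J2 (J2 →+ Circ)).trans
      ((AddEquiv.refl (J1 × J2)).prodCongr (dualProd J1 J2 Circ))), fun x y => ?_,
    ⟨(d1.prodCongr d2).trans (dualProd J1 J2 Circ)⟩⟩
  simp only []
  rw [h1 x.1 y.1, h2 x.2 y.2]
  show _ = ((e1 y.1).2 (e1 x.1).1 + (e2 y.2).2 (e2 x.2).1) -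
    ((e1 x.1).2 (e1 y.1).1 + (e2 x.2).2 (e2 y.2).1)
  abel

variable (n : ℕ)

def u : Circ := (((n : ℚ)⁻¹ : ℚ) : Circ)

lemma addOrderOf_u (hn : 0 < n) : addOrderOf (u n) = n := by
  have := AddCircle.addOrderOf_div_of_gcd_eq_one (p := (1 : ℚ)) (m := 1) hn
    (Nat.gcd_one_left n)
  simpa [u, one_div] using this

lemma nsmul_u (hn : 0 < n) : n • u n = 0 := by
  nth_rewrite 1 [← addOrderOf_u n hn]
  exact addOrderOf_nsmul_eq_zero (u n)

lemma zsmul_u_eq_zero_iff (hn : 0 < n) (m : ℤ) : m • u n = 0 ↔ (n : ℤ) ∣ m := by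
  rw [← addOrderOf_dvd_iff_zsmul_eq_zero, addOrderOf_u n hn]

def iota (hn : 0 < n) : ZMod n →+ Circ :=
  ZMod.lift n ⟨zmultiplesHom Circ (u n), by
    simp only [zmultiplesHom_apply, natCast_zsmul]
    exact nsmul_u n hn⟩

lemma iota_coe (hn : 0 < n) (m : ℤ) : iota n hn (m : ZMod n) = m • u n :=
  ZMod.lift_coe n _ m

lemma iota_eq_zero_iff (hn : 0 < n) (b : ZMod n) : iota n hn b = 0 ↔ b = 0 := by
  obtain ⟨m, rfl⟩ := ZMod.intCast_surjective b
  rw [iota_coe n hn, zsmul_u_eq_zero_iff n hn, ZMod.intCast_zmod_eq_zero_iff_dvd]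

lemma iota_injective (hn : 0 < n) : Function.Injective (iota n hn) := by
  intro a b hab
  have h : iota n hn (a - b) = 0 := by rw [map_sub, hab, sub_self]
  rw [iota_eq_zero_iff] at h
  exact sub_eq_zero.mp h

lemma exists_iota (hn : 0 < n) (z : Circ) (hz : n • z = 0) :
    ∃ b : ZMod n, iota n hn b = z := by
  obtain ⟨q, rfl⟩ := QuotientAddGroup.mk_surjective z
  rw [show ((n : ℕ) • (q : Circ)) = (((n : ℚ) * q : ℚ) : Circ) by
      rw [← AddCircle.coe_nsmul]; norm_num, AddCircle.coe_eq_zero_iff] at hz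
  obtain ⟨k, hk⟩ := hz
  refine ⟨((k : ℤ) : ZMod n), ?_⟩
  rw [iota_coe n hn]
  have hn' : (n : ℚ) ≠ 0 := by exact_mod_cast hn.ne'
  have hk' : (k : ℚ) = n * q := by simpa using hk
  have hq : k • ((n : ℚ)⁻¹ : ℚ) = q := by
    rw [zsmul_eq_mul, hk']
    field_simp
  rw [show u n = (((n : ℚ)⁻¹ : ℚ) : Circ) from rfl, ← AddCircle.coe_zsmul, hq]

lemma u_ne_zero (hn : 2 ≤ n) : u n ≠ 0 := by
  intro h
  have := addOrderOf_u n (by omega)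
  rw [h, addOrderOf_zero] at this
  omega

def delta0 (hn : 0 < n) : ZMod n →+ (ZMod n →+ Circ) where
  toFun b := (iota n hn).comp (AddMonoidHom.mulLeft b)
  map_zero' := by ext a; simp
  map_add' b c := by ext a; simp [add_mul]

lemma delta0_apply (hn : 0 < n) (b a : ZMod n) : delta0 n hn b a = iota n hn (b * a) := rfl

def delta (hn : 0 < n) : ZMod n ≃+ (ZMod n →+ Circ) := by
  refine AddEquiv.ofBijective (delta0 n hn) ⟨?_, ?_⟩
  · rw [injective_iff_map_eq_zero]
    intro b hb
    have := congrArg (fun ψ : ZMod n →+ Circ => ψ 1) hb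
    simp only [delta0_apply, mul_one, AddMonoidHom.zero_apply] at this
    rwa [iota_eq_zero_iff] at this
  · intro χ
    have h1 : n • χ 1 = 0 := by
      rw [← map_nsmul, nsmul_eq_mul, mul_one, ZMod.natCast_self, map_zero]
    obtain ⟨b, hb⟩ := exists_iota n hn (χ 1) h1
    refine ⟨b, AddMonoidHom.ext fun a => ?_⟩
    obtain ⟨m, rfl⟩ := ZMod.intCast_surjective a
    have e1 : ((m : ZMod n)) = m • (1 : ZMod n) := by simp
    rw [delta0_apply, e1, mul_smul_comm, mul_one, map_zsmul, map_zsmul, hb]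

lemma delta_apply (hn : 0 < n) (b a : ZMod n) : delta n hn b a = iota n hn (b * a) := rfl

lemma good_zmod (hn : 0 < n) :
    Good (ZMod n × ZMod n) (fun x y => iota n hn (x.1 * y.2 - x.2 * y.1)) := by
  haveI : NeZero n := ⟨hn.ne'⟩
  refine ⟨ZMod n, inferInstance, inferInstance,
    AddEquiv.prodCongr (AddEquiv.refl (ZMod n)) (delta n hn), fun x y => ?_, ⟨delta n hn⟩⟩
  show iota n hn _ = delta n hn y.2 x.1 - delta n hn x.2 y.1
  rw [delta_apply, delta_apply, ← map_sub]
  ring_nf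


lemma main : ∀ (N : ℕ) (G : Type) [AddCommGroup G] [Fintype G] (f : G → G → Circ),
    (∀ x y z, f (x + y) z = f x z + f y z) →
    (∀ x y z, f x (y + z) = f x y + f x z) →
    (∀ x, f x x = 0) →
    (∀ x, (∀ y, f x y = 0) → x = 0) →
    Fintype.card G ≤ N → Good G f := by
  intro N
  induction N using Nat.strong_induction_on with
  | _ N IH =>
  intro G _ _ f hL hR halt hnd hcard
  by_cases hs : Fintype.card G ≤ 1
  · haveI := Fintype.card_le_one_iff_subsingleton.mp hs
    apply good_of_subsingleton
    have h := hL 0 0 0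
    rw [zero_add] at h
    exact (left_eq_add.mp h).symm ▸ rfl
  · haveI : Nontrivial G := Fintype.one_lt_card_iff_nontrivial.mp (by omega)
    have hexp : AddMonoid.ExponentExists G := AddMonoid.ExponentExists.of_finite
    set n := AddMonoid.exponent G with hn_def
    have hn0 : 0 < n := AddMonoid.exponent_pos.mpr hexp
    obtain ⟨x, hx⟩ := AddMonoid.exists_addOrderOf_eq_exponent hexp
    have hkill : ∀ g : G, n • g = 0 := fun g => AddMonoid.exponent_nsmul_eq_zero g
    have hn2 : 2 ≤ n := by
      by_contra h
      push_neg at h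
      interval_cases n
      · obtain ⟨a, b, hab⟩ := exists_pair_ne G
        apply hab
        have ha := hkill a
        have hb := hkill b
        rw [one_nsmul] at ha hb
        rw [ha, hb]
    haveI : NeZero n := ⟨hn0.ne'⟩
    -- bilinearity consequences
    have hzsr : ∀ (t : G) (m : ℤ) (s : G), f t (m • s) = m • f t s :=
      fun t m s => map_zsmul (AddMonoidHom.mk' (f t) (hR t)) m s
    have hzsl : ∀ (m : ℤ) (t s : G), f (m • t) s = m • f t s :=
      fun m t s => map_zsmul (AddMonoidHom.mk' (fun a => f a s) (fun a b => hL a b s)) m t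
    have hnsr : ∀ (t : G) (m : ℕ) (s : G), f t (m • s) = m • f t s :=
      fun t m s => map_nsmul (AddMonoidHom.mk' (f t) (hR t)) m s
    have hnsl : ∀ (m : ℕ) (t s : G), f (m • t) s = m • f t s :=
      fun m t s => map_nsmul (AddMonoidHom.mk' (fun a => f a s) (fun a b => hL a b s)) m t
    have hf0r : ∀ t, f t 0 = 0 := fun t => map_zero (AddMonoidHom.mk' (f t) (hR t))
    have hf0l : ∀ s, f 0 s = 0 :=
      fun s => map_zero (AddMonoidHom.mk' (fun a => f a s) (fun a b => hL a b s))
    have hsubr : ∀ (t a b : G), f t (a - b) = f t a - f t b :=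
      fun t a b => map_sub (AddMonoidHom.mk' (f t) (hR t)) a b
    have hskew : ∀ a b : G, f a b = - f b a := by
      intro a b
      have h := halt (a + b)
      rw [hL, hR, hR, halt, halt, zero_add, add_zero] at h
      exact eq_neg_of_add_eq_zero_left h
    -- x pairs to 1/n with some y
    have htor : ∀ g : G, n • f x g = 0 := by
      intro g
      rw [← hnsr x n g, hkill g, hf0r]
    have hchoice : ∀ g : G, ∃ b : ZMod n, iota n hn0 b = f x g :=
      fun g => exists_iota n hn0 _ (htor g)
    have hΦadd : ∀ g h, Classical.choose (hchoice (g + h)) =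
        Classical.choose (hchoice g) + Classical.choose (hchoice h) := by
      intro g h
      apply iota_injective n hn0
      rw [map_add, Classical.choose_spec (hchoice (g+h)), Classical.choose_spec (hchoice g),
        Classical.choose_spec (hchoice h), hR]
    set Φ : G →+ ZMod n := AddMonoidHom.mk' (fun g => Classical.choose (hchoice g)) hΦadd
      with hΦ_def
    have hΦ : ∀ g, iota n hn0 (Φ g) = f x g := fun g => Classical.choose_spec (hchoice g)
    have hRsmul : ∀ g : G, (Nat.card Φ.range) • Φ g = 0 := by
      intro g
      have h1 : (Nat.card Φ.range) • (⟨Φ g, AddMonoidHom.mem_range.mpr ⟨g, rfl⟩⟩ : Φ.range)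
          = 0 := card_nsmul_eq_zero'
      have h2 := congrArg (Subtype.val) h1
      simpa using h2
    have hndvd : n ∣ Nat.card Φ.range := by
      have hzero : ∀ g : G, f ((Nat.card Φ.range) • x) g = 0 := by
        intro g
        rw [hnsl, ← hΦ g, ← map_nsmul, hRsmul g, map_zero]
      have hx0 : (Nat.card Φ.range) • x = 0 := hnd _ hzero
      have h3 := addOrderOf_dvd_of_nsmul_eq_zero hx0
      rwa [hx] at h3
    have hcardR : Nat.card Φ.range = n := by
      have hle : Nat.card Φ.range ≤ n := by
        have := Nat.card_le_card_of_injective (Subtype.val : Φ.range → ZMod n)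
          Subtype.val_injective
        simpa [Nat.card_zmod] using this
      exact Nat.le_antisymm hle (Nat.le_of_dvd Nat.card_pos hndvd)
    obtain ⟨y, hy⟩ : ∃ y, Φ y = 1 := by
      have htop : Φ.range = ⊤ := AddSubgroup.eq_top_of_card_eq _
        (by rw [hcardR, Nat.card_zmod])
      have : (1 : ZMod n) ∈ Φ.range := htop ▸ AddSubgroup.mem_top _
      exact this
    have hfxy : f x y = u n := by
      rw [← hΦ y, hy, show (1 : ZMod n) = ((1 : ℤ) : ZMod n) by norm_cast,
        iota_coe, one_zsmul]
    have hfyx : f y x = - u n := by rw [hskew y x, hfxy]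
    -- the maps X Y
    set X : ZMod n →+ G := ZMod.lift n ⟨zmultiplesHom G x, by
      simp only [zmultiplesHom_apply, natCast_zsmul]; exact hkill x⟩ with hX_def
    set Y : ZMod n →+ G := ZMod.lift n ⟨zmultiplesHom G y, by
      simp only [zmultiplesHom_apply, natCast_zsmul]; exact hkill y⟩ with hY_def
    have hX : ∀ m : ℤ, X (m : ZMod n) = m • x := fun m => ZMod.lift_coe n _ m
    have hY : ∀ m : ℤ, Y (m : ZMod n) = m • y := fun m => ZMod.lift_coe n _ m
    -- the orthogonal complement K
    set K : AddSubgroup G :=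
      (AddMonoidHom.mk' (f x) (hR x)).ker ⊓ (AddMonoidHom.mk' (f y) (hR y)).ker with hK_def
    have hmemK : ∀ g, g ∈ K ↔ f x g = 0 ∧ f y g = 0 := by
      intro g
      rw [hK_def, AddSubgroup.mem_inf, AddMonoidHom.mem_ker, AddMonoidHom.mem_ker]
      exact Iff.rfl
    letI : DecidablePred (· ∈ K) := Classical.decPred _
    set ψ : (ZMod n × ZMod n) × K →+ G := (X.coprod Y).coprod K.subtype with hψ_def
    have hψ : ∀ p : (ZMod n × ZMod n) × K, ψ p = X p.1.1 + Y p.1.2 + ↑p.2 := fun p => rfl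
    have hinj : Function.Injective ψ := by
      rw [injective_iff_map_eq_zero]
      rintro ⟨⟨a, b⟩, k⟩ h
      rw [hψ] at h
      obtain ⟨ma, rfl⟩ := ZMod.intCast_surjective a
      obtain ⟨mb, rfl⟩ := ZMod.intCast_surjective b
      obtain ⟨hk1, hk2⟩ := (hmemK ↑k).mp k.2
      have hb0 : ((mb : ℤ) : ZMod n) = 0 := by
        have h1 := congrArg (f x) h
        simp only [hX, hY] at h1
        rw [hf0r, hR, hR, hzsr, hzsr, halt, smul_zero, zero_add, hfxy, hk1, add_zero] at h1
        rw [ZMod.intCast_zmod_eq_zero_iff_dvd]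
        exact (zsmul_u_eq_zero_iff n hn0 mb).mp h1
      have ha0 : ((ma : ℤ) : ZMod n) = 0 := by
        have h1 := congrArg (f y) h
        simp only [hX, hY] at h1
        rw [hf0r, hR, hR, hzsr, hzsr, halt, smul_zero, add_zero, hfyx, hk2, add_zero,
          smul_neg] at h1
        rw [ZMod.intCast_zmod_eq_zero_iff_dvd]
        exact (zsmul_u_eq_zero_iff n hn0 ma).mp (neg_eq_zero.mp h1)
      rw [ha0, hb0, map_zero, map_zero, zero_add, zero_add] at h
      have hk0 : k = 0 := by
        exact Subtype.ext h
      rw [ha0, hb0, hk0]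
      rfl
    have hsurj : Function.Surjective ψ := by
      intro g
      have htory : n • f y g = 0 := by rw [← hnsr y n g, hkill g, hf0r]
      obtain ⟨b', hb'⟩ := exists_iota n hn0 (f x g) (htor g)
      obtain ⟨a', ha'⟩ := exists_iota n hn0 (f y g) htory
      obtain ⟨mb, rfl⟩ := ZMod.intCast_surjective b'
      obtain ⟨ma, rfl⟩ := ZMod.intCast_surjective a'
      rw [iota_coe] at hb' ha'
      have hk : g - ((-ma) • x + mb • y) ∈ K := by
        rw [hmemK]
        constructor
        · rw [hsubr, hR, hzsr, hzsr, halt, smul_zero, zero_add, hfxy, ← hb', sub_self]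
        · rw [hsubr, hR, hzsr, hzsr, halt, smul_zero, add_zero, hfyx, smul_neg, neg_smul,
            neg_neg, ← ha', sub_self]
      refine ⟨⟨(((-ma : ℤ) : ZMod n), ((mb : ℤ) : ZMod n)), ⟨_, hk⟩⟩, ?_⟩
      rw [hψ]
      simp only [hX, hY]
      abel
    -- restricted form on K
    set fK : K → K → Circ := fun k l => f ↑k ↑l with hfK_def
    have hGoodK : Good K fK := by
      have hcardlt : Fintype.card K < Fintype.card G := by
        apply Fintype.card_subtype_lt (x := x)
        rw [hmemK]
        rintro ⟨-, h2⟩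
        rw [hfyx, neg_eq_zero] at h2
        exact u_ne_zero n hn2 h2
      apply IH (Fintype.card K) (lt_of_lt_of_le hcardlt hcard) K fK
      · intro a b c; exact hL a b c
      · intro a b c; exact hR a b c
      · intro a; exact halt a
      · intro k hk
        have hall : ∀ g : G, f ↑k g = 0 := by
          intro g
          obtain ⟨⟨⟨a, b⟩, l⟩, rfl⟩ := hsurj g
          rw [hψ]
          obtain ⟨ma, rfl⟩ := ZMod.intCast_surjective a
          obtain ⟨mb, rfl⟩ := ZMod.intCast_surjective b
          obtain ⟨hk1, hk2⟩ := (hmemK ↑k).mp k.2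
          have hkx : f ↑k x = 0 := by rw [hskew, hk1, neg_zero]
          have hky : f ↑k y = 0 := by rw [hskew, hk2, neg_zero]
          simp only [hX, hY]
          rw [hR, hR, hzsr, hzsr, hkx, hky, smul_zero, smul_zero, zero_add, zero_add]
          exact hk l
        exact Subtype.ext (hnd _ hall)
      · exact le_rfl
    -- the total form on the product
    have hGoodF := good_prod _ _ (good_zmod n hn0) hGoodK
    apply Good.of_equiv (AddEquiv.ofBijective ψ ⟨hinj, hsurj⟩) _ f _ hGoodF
    rintro ⟨⟨a, b⟩, k⟩ ⟨⟨c, d⟩, l⟩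
    show f (ψ _) (ψ _) = iota n hn0 (a * d - b * c) + f ↑k ↑l
    obtain ⟨ma, rfl⟩ := ZMod.intCast_surjective a
    obtain ⟨mb, rfl⟩ := ZMod.intCast_surjective b
    obtain ⟨mc, rfl⟩ := ZMod.intCast_surjective c
    obtain ⟨md, rfl⟩ := ZMod.intCast_surjective d
    obtain ⟨hk1, hk2⟩ := (hmemK ↑k).mp k.2
    obtain ⟨hl1, hl2⟩ := (hmemK ↑l).mp l.2
    have hkx : f ↑(k : K) x = 0 := by rw [hskew, hk1, neg_zero]
    have hky : f ↑(k : K) y = 0 := by rw [hskew, hk2, neg_zero]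
    rw [hψ, hψ]
    simp only [hX, hY]
    rw [hL, hL, hR, hR, hR, hR, hR, hR]
    simp only [hzsl, hzsr]
    rw [halt x, halt y, hl1, hl2, hkx, hky, hfxy, hfyx]
    simp only [smul_zero, zero_add, add_zero, smul_neg, smul_smul]
    rw [show ((ma : ZMod n) * ↑md - ↑mb * ↑mc) = (((ma * md - mb * mc : ℤ)) : ZMod n) by
      push_cast; ring, iota_coe, sub_smul]
    abel

end Symp

/-- every symplectic finite abelian group `(G, f)` is isomorphic,
as a symplectic group, to `J × J^∨` with the pairing `[(a,φ),(b,ψ)] = ψ(a) - φ(b)`;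
in particular `G ≅ J × J` as abstract groups. -/
theorem symplectic_iso_J_times_dual (G : Type) [AddCommGroup G] [Fintype G]
    (f : G → G → AddCircle (1 : ℚ))
    (hadd_left : ∀ x y z, f (x + y) z = f x z + f y z)
    (hadd_right : ∀ x y z, f x (y + z) = f x y + f x z)
    (halt : ∀ x, f x x = 0)
    (hnondeg : ∀ x, (∀ y, f x y = 0) → x = 0) :
    ∃ (J : Type) (_ : AddCommGroup J) (_ : Fintype J)
      (e : G ≃+ (J × (J →+ AddCircle (1 : ℚ)))),
      (∀ x y, f x y = (e y).2 (e x).1 - (e x).2 (e y).1) ∧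
      Nonempty (G ≃+ (J × J)) := by
  obtain ⟨J, i1, i2, e, hp, ⟨d⟩⟩ :=
    Symp.main (Fintype.card G) G f hadd_left hadd_right halt hnondeg le_rfl
  exact ⟨J, i1, i2, e, hp, ⟨e.trans (AddEquiv.prodCongr (AddEquiv.refl J) d.symm)⟩⟩
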